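/- Let N ≥ 1, let W̄, V̄ ∈ ℂ^{N×N} be Hermitian, l̂ ∈ ℂ^N, I ∈ ℝ, and let υ > 0. Then the robust interference constraint 'for every Δl ∈ ℂ^N with Δlᴴ Δl ≤ υ², writing l = l̂ + Δl, one has lᴴ (W̄ + V̄) l ≤ I' holds if and only if there exists ω ≥ 0 such that the (N+1)×(N+1) Hermitian matrix [[ω I_N − V̄, −V̄ l̂],[−l̂ᴴ V̄, −ω υ² + I − l̂ᴴ V̄ l̂]] − U_l̂ᴴ W̄ U_l̂ is positive semidefinite, where U_l̂ = [I_N l̂] ∈ ℂ^{N×(N+1)}. -/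

import Mathlib

open Matrix
open scoped ComplexOrder

/-- `U_l̂ = [I_N  l̂]`, the `N×(N+1)` matrix whose first `N` columns form `I_N` and whose last
column is `l̂`. -/
noncomputable def Ul {N : ℕ} (lhat : Fin N → ℂ) : Matrix (Fin N) (Fin N ⊕ Unit) ℂ :=
  Matrix.fromCols (1 : Matrix (Fin N) (Fin N) ℂ) (Matrix.replicateCol Unit lhat)

/-- The LMI matrix `[[ω I_N − V̄, −V̄ l̂],[−l̂ᴴ V̄, −ω υ² + I − l̂ᴴ V̄ l̂]] − U_l̂ᴴ W̄ U_l̂`. -/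
noncomputable def SC11 {N : ℕ} (W V : Matrix (Fin N) (Fin N) ℂ) (lhat : Fin N → ℂ)
    (I ω υ : ℝ) : Matrix (Fin N ⊕ Unit) (Fin N ⊕ Unit) ℂ :=
  Matrix.fromBlocks
    ((ω : ℂ) • (1 : Matrix (Fin N) (Fin N) ℂ) - V)
    (Matrix.replicateCol Unit (-(V *ᵥ lhat)))
    (Matrix.replicateRow Unit (-(star lhat ᵥ* V)))
    (Matrix.of fun _ _ => (-(ω * υ ^ 2) + I : ℂ) - star lhat ⬝ᵥ V *ᵥ lhat)
  - (Ul lhat)ᴴ * W * Ul lhat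

/-! ### Quadratic form helpers -/

/-- The (real part of the) Hermitian quadratic form of a matrix. -/
noncomputable def RIqf {n : Type*} [Fintype n] (M : Matrix n n ℂ) (x : n → ℂ) : ℝ :=
  (star x ⬝ᵥ M *ᵥ x).re

namespace RobustInterference

variable {n : Type*} [Fintype n]

lemma qf_cross (M : Matrix n n ℂ) (hM : Mᴴ = M) (x y : n → ℂ) :
    star y ⬝ᵥ M *ᵥ x = star (star x ⬝ᵥ M *ᵥ y) := by
  rw [star_dotProduct, star_mulVec, hM, ← dotProduct_mulVec]

lemma qf_real (M : Matrix n n ℂ) (hM : Mᴴ = M) (x : n → ℂ) :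
    (star x ⬝ᵥ M *ᵥ x).im = 0 := by
  have := qf_cross M hM x x
  have h2 : (starRingEnd ℂ) (star x ⬝ᵥ M *ᵥ x) = star x ⬝ᵥ M *ᵥ x := by
    rw [← Complex.star_def, ← this]
  rw [Complex.conj_eq_iff_im] at h2
  exact h2

lemma qf_combo (M : Matrix n n ℂ) (hM : Mᴴ = M) (x y : n → ℂ) (a : ℝ) (b : ℂ) :
    RIqf M ((a : ℂ) • x + b • y)
      = a ^ 2 * RIqf M x + Complex.normSq b * RIqf M y
        + 2 * a * (b * (star x ⬝ᵥ M *ᵥ y)).re := by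
  have expand : star ((a : ℂ) • x + b • y) ⬝ᵥ M *ᵥ ((a : ℂ) • x + b • y)
      = (a : ℂ) ^ 2 * (star x ⬝ᵥ M *ᵥ x) + (star b * b) * (star y ⬝ᵥ M *ᵥ y)
        + (a : ℂ) * (b * (star x ⬝ᵥ M *ᵥ y)) + (a : ℂ) * star (b * (star x ⬝ᵥ M *ᵥ y)) := by
    rw [star_add, star_smul, star_smul, mulVec_add, mulVec_smul, mulVec_smul,
      dotProduct_add, add_dotProduct, add_dotProduct, smul_dotProduct, smul_dotProduct,
      dotProduct_smul, dotProduct_smul, dotProduct_smul, dotProduct_smul,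
      qf_cross M hM x y]
    simp only [Complex.star_def, smul_eq_mul, Complex.conj_ofReal,
      map_mul (starRingEnd ℂ), smul_dotProduct, dotProduct_smul]
    ring
  unfold RIqf
  rw [expand]
  have h2 : (star b * b : ℂ) = (Complex.normSq b : ℂ) := by
    rw [Complex.star_def, Complex.normSq_eq_conj_mul_self]
  rw [h2]
  simp only [Complex.add_re, ← Complex.ofReal_pow, Complex.re_ofReal_mul]
  have h3 : (star (b * (star x ⬝ᵥ M *ᵥ y))).re = (b * (star x ⬝ᵥ M *ᵥ y)).re := by
    rw [Complex.star_def, Complex.conj_re]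
  rw [h3]
  ring

lemma qf_smul (M : Matrix n n ℂ) (b : ℂ) (x : n → ℂ) :
    RIqf M (b • x) = Complex.normSq b * RIqf M x := by
  unfold RIqf
  rw [star_smul, mulVec_smul, dotProduct_smul, smul_dotProduct]
  have : b • star b • (star x ⬝ᵥ M *ᵥ x) = (Complex.normSq b : ℂ) * (star x ⬝ᵥ M *ᵥ x) := by
    rw [smul_eq_mul, smul_eq_mul, ← mul_assoc, Complex.star_def, mul_comm b,
      ← Complex.normSq_eq_conj_mul_self]
  rw [this, Complex.re_ofReal_mul]

lemma qf_zero (M : Matrix n n ℂ) : RIqf M 0 = 0 := by unfold RIqf; simp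

lemma qf_sub (M M' : Matrix n n ℂ) (x : n → ℂ) :
    RIqf (M - M') x = RIqf M x - RIqf M' x := by
  unfold RIqf; rw [sub_mulVec, dotProduct_sub, Complex.sub_re]

lemma qf_neg (M : Matrix n n ℂ) (x : n → ℂ) : RIqf (-M) x = -RIqf M x := by
  unfold RIqf; rw [neg_mulVec, dotProduct_neg, Complex.neg_re]

lemma qf_add (M M' : Matrix n n ℂ) (x : n → ℂ) :
    RIqf (M + M') x = RIqf M x + RIqf M' x := by
  unfold RIqf; rw [add_mulVec, dotProduct_add, Complex.add_re]

lemma qf_real_smul (M : Matrix n n ℂ) (r : ℝ) (x : n → ℂ) :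
    RIqf ((r : ℂ) • M) x = r * RIqf M x := by
  unfold RIqf
  rw [smul_mulVec, dotProduct_smul, smul_eq_mul, Complex.re_ofReal_mul]

/-- The norm-square expansion of the self dot product. -/
lemma dot_self_re (u : n → ℂ) :
    (star u ⬝ᵥ u).re = ∑ i, Complex.normSq (u i) := by
  rw [dotProduct, Complex.re_sum]
  refine Finset.sum_congr rfl fun i _ => ?_
  rw [Pi.star_apply, Complex.star_def, mul_comm, Complex.mul_conj, Complex.ofReal_re]

lemma dot_self_nonneg (u : n → ℂ) : 0 ≤ (star u ⬝ᵥ u).re := by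
  rw [dot_self_re]
  exact Finset.sum_nonneg fun i _ => Complex.normSq_nonneg _

/-! ### Complex Dines theorem -/

lemma ratio_exists (κ s : ℝ) (hs0 : 0 ≤ s) (hs1 : s ≤ 1) :
    ∃ t : ℝ, 0 ≤ t ∧ t ≤ 1 ∧
      t ^ 2 - 2 * t * (1 - t) * κ = (1 - s) * (t ^ 2 + (1 - t) ^ 2) ∧
      (1 - t) ^ 2 + 2 * t * (1 - t) * κ = s * (t ^ 2 + (1 - t) ^ 2) := by
  have hden : ∀ t : ℝ, 0 < t ^ 2 + (1 - t) ^ 2 := by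
    intro t; nlinarith [sq_nonneg t, sq_nonneg (1 - t), sq_nonneg (2*t - 1)]
  have hcont : ContinuousOn (fun t : ℝ => (t ^ 2 - 2 * t * (1 - t) * κ) / (t ^ 2 + (1 - t) ^ 2))
      (Set.Icc 0 1) := by
    apply ContinuousOn.div
    · fun_prop
    · fun_prop
    · intro t _; exact ne_of_gt (hden t)
  have key := intermediate_value_Icc (by norm_num : (0:ℝ) ≤ 1) hcont
  norm_num at key
  obtain ⟨t, ht, hval⟩ := key (a := 1 - s) ⟨by linarith, by linarith⟩
  refine ⟨t, ht.1, ht.2, ?_, ?_⟩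
  · have := hden t
    field_simp at hval
    linarith [hval]
  · have := hden t
    field_simp at hval
    nlinarith [hval]

lemma qf_point (M : Matrix n n ℂ) (hM : Mᴴ = M) (x y : n → ℂ) (μ : ℂ) (t κ s : ℝ)
    (hμ : Complex.normSq μ = 1)
    (hm : (μ * (star x ⬝ᵥ M *ᵥ y)).re = κ * (RIqf M y - RIqf M x))
    (heq1 : t ^ 2 - 2 * t * (1 - t) * κ = (1 - s) * (t ^ 2 + (1 - t) ^ 2))
    (heq2 : (1 - t) ^ 2 + 2 * t * (1 - t) * κ = s * (t ^ 2 + (1 - t) ^ 2)) :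
    RIqf M (((Real.sqrt (t ^ 2 + (1 - t) ^ 2)⁻¹ : ℝ) : ℂ) •
        ((t : ℂ) • x + (((1 - t : ℝ) : ℂ) * μ) • y))
      = (1 - s) * RIqf M x + s * RIqf M y := by
  have hcpos : 0 < t ^ 2 + (1 - t) ^ 2 := by
    nlinarith [sq_nonneg t, sq_nonneg (1 - t), sq_nonneg (2*t - 1)]
  rw [qf_smul, qf_combo M hM x y t _]
  have hnr : Complex.normSq ((Real.sqrt (t ^ 2 + (1 - t) ^ 2)⁻¹ : ℝ) : ℂ)
      = (t ^ 2 + (1 - t) ^ 2)⁻¹ := by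
    rw [Complex.normSq_ofReal, Real.mul_self_sqrt (by positivity)]
  have hnb : Complex.normSq (((1 - t : ℝ) : ℂ) * μ) = (1 - t) ^ 2 := by
    rw [Complex.normSq_mul, hμ, Complex.normSq_ofReal]; ring
  have hre : ((((1 - t : ℝ) : ℂ) * μ) * (star x ⬝ᵥ M *ᵥ y)).re
      = (1 - t) * (κ * (RIqf M y - RIqf M x)) := by
    rw [mul_assoc, Complex.re_ofReal_mul, hm]
  rw [hnr, hnb, hre]
  have expand : t ^ 2 * RIqf M x + (1 - t) ^ 2 * RIqf M y
        + 2 * t * ((1 - t) * (κ * (RIqf M y - RIqf M x)))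
      = (t ^ 2 - 2 * t * (1 - t) * κ) * RIqf M x
        + ((1 - t) ^ 2 + 2 * t * (1 - t) * κ) * RIqf M y := by ring
  rw [expand, heq1, heq2]
  field_simp

/-- Complex Dines theorem: the joint range of two Hermitian quadratic forms is convex. -/
lemma dines_mem (P Q : Matrix n n ℂ) (hP : Pᴴ = P) (hQ : Qᴴ = Q) (x y : n → ℂ)
    (s : ℝ) (hs0 : 0 ≤ s) (hs1 : s ≤ 1) :
    ∃ z : n → ℂ, RIqf P z = (1 - s) * RIqf P x + s * RIqf P y ∧
      RIqf Q z = (1 - s) * RIqf Q x + s * RIqf Q y := by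
  by_cases hd : RIqf P y - RIqf P x = 0 ∧ RIqf Q y - RIqf Q x = 0
  · exact ⟨x, by nlinarith [hd.1], by nlinarith [hd.2]⟩
  · have hw : ∃ μ : ℂ, Complex.normSq μ = 1 ∧
        (μ * ((-(RIqf Q y - RIqf Q x) : ℝ) * (star x ⬝ᵥ P *ᵥ y)
          + ((RIqf P y - RIqf P x : ℝ) : ℂ) * (star x ⬝ᵥ Q *ᵥ y))).re = 0 := by
      set w : ℂ := (-(RIqf Q y - RIqf Q x) : ℝ) * (star x ⬝ᵥ P *ᵥ y)
          + ((RIqf P y - RIqf P x : ℝ) : ℂ) * (star x ⬝ᵥ Q *ᵥ y) with hwdef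
      by_cases hw0 : w = 0
      · exact ⟨1, by simp, by simp [hw0]⟩
      · refine ⟨Complex.I * (starRingEnd ℂ) w / ‖w‖, ?_, ?_⟩
        · rw [map_div₀, _root_.map_mul, Complex.normSq_I, one_mul, Complex.normSq_conj,
            Complex.normSq_ofReal, ← pow_two, Complex.sq_norm]
          exact div_self (by simpa using hw0)
        · have : Complex.I * (starRingEnd ℂ) w / ‖w‖ * w
              = Complex.I * ((Complex.normSq w / ‖w‖ : ℝ) : ℂ) := by
            push_cast
            rw [Complex.normSq_eq_conj_mul_self]
            ring
          rw [this]
          simp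
    obtain ⟨μ, hμ1, hμ2⟩ := hw
    have hrel : -(RIqf Q y - RIqf Q x) * (μ * (star x ⬝ᵥ P *ᵥ y)).re
        + (RIqf P y - RIqf P x) * (μ * (star x ⬝ᵥ Q *ᵥ y)).re = 0 := by
      have expand : (μ * ((-(RIqf Q y - RIqf Q x) : ℝ) * (star x ⬝ᵥ P *ᵥ y)
          + ((RIqf P y - RIqf P x : ℝ) : ℂ) * (star x ⬝ᵥ Q *ᵥ y))).re
          = -(RIqf Q y - RIqf Q x) * (μ * (star x ⬝ᵥ P *ᵥ y)).re
            + (RIqf P y - RIqf P x) * (μ * (star x ⬝ᵥ Q *ᵥ y)).re := by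
        rw [mul_add, Complex.add_re, ← mul_assoc, ← mul_assoc,
          mul_comm μ ((-(RIqf Q y - RIqf Q x) : ℝ) : ℂ),
          mul_comm μ (((RIqf P y - RIqf P x : ℝ)) : ℂ),
          mul_assoc, mul_assoc, Complex.re_ofReal_mul, Complex.re_ofReal_mul]
      rw [← expand, hμ2]
    have hκ : ∃ κ : ℝ, (μ * (star x ⬝ᵥ P *ᵥ y)).re = κ * (RIqf P y - RIqf P x) ∧
        (μ * (star x ⬝ᵥ Q *ᵥ y)).re = κ * (RIqf Q y - RIqf Q x) := by
      rcases eq_or_ne (RIqf P y - RIqf P x) 0 with h1 | h1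
      · have h2 : RIqf Q y - RIqf Q x ≠ 0 := fun h => hd ⟨h1, h⟩
        refine ⟨(μ * (star x ⬝ᵥ Q *ᵥ y)).re / (RIqf Q y - RIqf Q x), ?_, by field_simp⟩
        rw [h1, mul_zero]
        rw [h1, zero_mul, add_zero] at hrel
        rcases mul_eq_zero.mp hrel with h | h
        · exact (h2 (neg_eq_zero.mp h)).elim
        · exact h
      · refine ⟨(μ * (star x ⬝ᵥ P *ᵥ y)).re / (RIqf P y - RIqf P x), by field_simp, ?_⟩
        rw [div_mul_eq_mul_div, eq_div_iff h1]
        linarith [hrel]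
    obtain ⟨κ, hκP, hκQ⟩ := hκ
    obtain ⟨t, ht0, ht1, heq1, heq2⟩ := ratio_exists κ s hs0 hs1
    exact ⟨_, qf_point P hP x y μ t κ s hμ1 hκP heq1 heq2,
      qf_point Q hQ x y μ t κ s hμ1 hκQ heq1 heq2⟩

/-! ### The S-lemma -/

/-- The S-lemma (S-procedure) for complex Hermitian quadratic forms. -/
theorem s_lemma (P Q : Matrix n n ℂ) (hP : Pᴴ = P) (hQ : Qᴴ = Q)
    (h : ∀ x : n → ℂ, 0 ≤ RIqf Q x → RIqf P x ≤ 0)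
    (x₀ : n → ℂ) (hx₀ : 0 < RIqf Q x₀) :
    ∃ ω : ℝ, 0 ≤ ω ∧ ∀ x : n → ℂ, RIqf P x + ω * RIqf Q x ≤ 0 := by
  set S : Set (ℝ × ℝ) := Set.range (fun x : n → ℂ => (RIqf P x, RIqf Q x)) with hS
  set O : Set (ℝ × ℝ) := Set.Ioi 0 ×ˢ Set.Ioi 0 with hO
  have hSconv : Convex ℝ S := by
    intro p hp q hq a b ha hb hab
    obtain ⟨u, hu⟩ := hp
    obtain ⟨v, hv⟩ := hq
    obtain ⟨z, hz1, hz2⟩ := dines_mem P Q hP hQ u v b hb (by linarith)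
    refine ⟨z, ?_⟩
    have hab' : a = 1 - b := by linarith
    subst hu
    subst hv
    simp only [Prod.smul_mk, Prod.mk_add_mk, smul_eq_mul, Prod.mk.injEq]
    exact ⟨by rw [hz1, hab'], by rw [hz2, hab']⟩
  have hOconv : Convex ℝ O := (convex_Ioi (0:ℝ)).prod (convex_Ioi 0)
  have hOopen : IsOpen O := isOpen_Ioi.prod isOpen_Ioi
  have hdisj : Disjoint O S := by
    rw [Set.disjoint_left]
    rintro p ⟨hp1, hp2⟩ ⟨u, hu⟩
    have h1 : 0 < RIqf P u := by rw [← hu] at hp1; exact hp1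
    have h2 : 0 < RIqf Q u := by rw [← hu] at hp2; exact hp2
    exact absurd (h u h2.le) (not_le.mpr h1)
  obtain ⟨f, u, hfO, hfS⟩ := geometric_hahn_banach_open hOconv hOopen hSconv hdisj
  set α := f (1, 0) with hα
  set β := f (0, 1) with hβ
  have hf : ∀ p : ℝ × ℝ, f p = p.1 * α + p.2 * β := by
    intro p
    have : p = p.1 • ((1:ℝ), (0:ℝ)) + p.2 • ((0:ℝ), (1:ℝ)) := by
      ext <;> simp
    rw [this, map_add, f.map_smul, f.map_smul, smul_eq_mul, smul_eq_mul]
    simp [hα, hβ]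
  have h0S : (0, 0) ∈ S := ⟨0, by simp only [qf_zero]⟩
  have hu0 : u ≤ 0 := by
    have := hfS _ h0S
    rwa [hf, zero_mul, zero_mul, add_zero] at this
  have hu0' : 0 ≤ u := by
    by_contra hc
    push_neg at hc
    have key : ∀ ε : ℝ, 0 < ε → ε * α + ε * β < u := by
      intro ε hε
      have := hfO (ε, ε) ⟨hε, hε⟩
      rwa [hf] at this
    rcases le_or_gt (α + β) 0 with hab | hab
    · rcases eq_or_lt_of_le hab with hab' | hab'
      · have := key 1 one_pos
        simp only [one_mul] at this
        linarith
      · have hne : α + β ≠ 0 := ne_of_lt hab'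
        have hε : 0 < u / (2 * (α + β)) := div_pos_of_neg_of_neg hc (by linarith)
        have := key _ hε
        have expand : u / (2 * (α + β)) * α + u / (2 * (α + β)) * β = u / 2 := by
          field_simp
        rw [expand] at this
        linarith
    · have := key 1 one_pos
      simp only [one_mul] at this
      linarith
  have huz : u = 0 := le_antisymm hu0 hu0'
  have hαneg : α ≤ 0 := by
    by_contra hc
    push_neg at hc
    have hε : 0 < α / (2 * (|β| + 1)) := by positivity
    have := hfO (1, α / (2 * (|β| + 1))) ⟨Set.mem_Ioi.mpr one_pos, Set.mem_Ioi.mpr hε⟩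
    rw [hf, huz] at this
    simp only [one_mul] at this
    have hb1 : α / (2 * (|β| + 1)) * β ≥ -(α / 2) := by
      have h1 : α / (2 * (|β| + 1)) * β ≥ -(α / (2 * (|β| + 1)) * |β|) := by
        have := neg_abs_le (α / (2 * (|β| + 1)) * β)
        rw [abs_mul, abs_of_pos hε] at this
        linarith [this]
      have h2 : α / (2 * (|β| + 1)) * |β| ≤ α / 2 := by
        rw [div_mul_eq_mul_div, div_le_div_iff₀ (by positivity) (by norm_num)]
        nlinarith [abs_nonneg β]
      linarith
    linarith
  have hβneg : β ≤ 0 := by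
    by_contra hc
    push_neg at hc
    have hε : 0 < β / (2 * (|α| + 1)) := by positivity
    have := hfO (β / (2 * (|α| + 1)), 1) ⟨Set.mem_Ioi.mpr hε, Set.mem_Ioi.mpr one_pos⟩
    rw [hf, huz] at this
    simp only [one_mul] at this
    have hb1 : β / (2 * (|α| + 1)) * α ≥ -(β / 2) := by
      have h1 : β / (2 * (|α| + 1)) * α ≥ -(β / (2 * (|α| + 1)) * |α|) := by
        have := neg_abs_le (β / (2 * (|α| + 1)) * α)
        rw [abs_mul, abs_of_pos hε] at this
        linarith [this]
      have h2 : β / (2 * (|α| + 1)) * |α| ≤ β / 2 := by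
        rw [div_mul_eq_mul_div, div_le_div_iff₀ (by positivity) (by norm_num)]
        nlinarith [abs_nonneg α]
      linarith
    linarith
  have hSineq : ∀ x : n → ℂ, 0 ≤ RIqf P x * α + RIqf Q x * β := by
    intro x
    have := hfS _ ⟨x, rfl⟩
    rwa [hf, huz] at this
  have hαlt : α < 0 := by
    rcases eq_or_lt_of_le hαneg with hα0 | hα0
    · exfalso
      have hβlt : β < 0 := by
        rcases eq_or_lt_of_le hβneg with hβ0 | hβ0
        · exfalso
          have := hfO (1, 1) ⟨Set.mem_Ioi.mpr one_pos, Set.mem_Ioi.mpr one_pos⟩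
          rw [hf, huz] at this
          rw [hα0, hβ0] at this
          simp at this
        · exact hβ0
      have := hSineq x₀
      rw [hα0, mul_zero, zero_add] at this
      nlinarith [mul_neg_of_pos_of_neg hx₀ hβlt]
    · exact hα0
  have hαne : α ≠ 0 := ne_of_lt hαlt
  refine ⟨β / α, by rw [← neg_div_neg_eq]; exact div_nonneg (by linarith) (by linarith), ?_⟩
  · intro x
    have h1 := hSineq x
    have h2 : α * (RIqf P x + β / α * RIqf Q x) = RIqf P x * α + RIqf Q x * β := by
      field_simp
    by_contra hc
    push_neg at hc
    have h3 := mul_neg_of_neg_of_pos hαlt hc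
    rw [h2] at h3
    linarith

end RobustInterference

/-! ### Matrix algebra specific to `SC11` -/

namespace RobustInterference

lemma Ul_mulVec {N : ℕ} (lhat : Fin N → ℂ) (x : Fin N ⊕ Unit → ℂ) :
    Ul lhat *ᵥ x = (fun i => x (Sum.inl i)) + x (Sum.inr ()) • lhat := by
  funext i
  simp [Ul, Matrix.mulVec, dotProduct, Fintype.sum_sum_type, Matrix.fromCols,
    Matrix.one_apply, Finset.sum_ite_eq, mul_comm]

noncomputable def EI {N : ℕ} (I : ℝ) : Matrix (Fin N ⊕ Unit) (Fin N ⊕ Unit) ℂ :=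
  Matrix.fromBlocks 0 0 0 (Matrix.of fun _ _ => (I : ℂ))

noncomputable def QQ {N : ℕ} (υ : ℝ) : Matrix (Fin N ⊕ Unit) (Fin N ⊕ Unit) ℂ :=
  Matrix.fromBlocks (-1) 0 0 (Matrix.of fun _ _ => ((υ : ℂ) ^ 2))

lemma qf_EI {N : ℕ} (I : ℝ) (x : Fin N ⊕ Unit → ℂ) :
    RIqf (EI I) x = I * Complex.normSq (x (Sum.inr ())) := by
  unfold RIqf EI
  have hv : (Matrix.fromBlocks 0 0 0 (Matrix.of fun _ _ => (I : ℂ)) :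
        Matrix (Fin N ⊕ Unit) (Fin N ⊕ Unit) ℂ) *ᵥ x
      = Sum.elim (0 : Fin N → ℂ) (fun _ => (I : ℂ) * x (Sum.inr ())) := by
    funext i
    rcases i with i | i
    · simp [Matrix.mulVec, dotProduct, Fintype.sum_sum_type, Matrix.fromBlocks]
    · simp [Matrix.mulVec, dotProduct, Fintype.sum_sum_type, Matrix.fromBlocks]
  rw [hv]
  simp [dotProduct, Fintype.sum_sum_type, Complex.normSq_apply, Complex.mul_re]
  ring

lemma qf_QQ {N : ℕ} (υ : ℝ) (x : Fin N ⊕ Unit → ℂ) :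
    RIqf (QQ υ) x = υ ^ 2 * Complex.normSq (x (Sum.inr ()))
      - (star (fun i => x (Sum.inl i)) ⬝ᵥ (fun i => x (Sum.inl i))).re := by
  unfold RIqf QQ
  have hv : (Matrix.fromBlocks (-1) 0 0 (Matrix.of fun _ _ => ((υ : ℂ) ^ 2)) :
        Matrix (Fin N ⊕ Unit) (Fin N ⊕ Unit) ℂ) *ᵥ x
      = Sum.elim (fun i => -(x (Sum.inl i))) (fun _ => ((υ : ℂ) ^ 2) * x (Sum.inr ())) := by
    funext i
    rcases i with i | i
    · simp [Matrix.mulVec, dotProduct, Fintype.sum_sum_type, Matrix.fromBlocks,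
        Matrix.one_apply]
    · simp [Matrix.mulVec, dotProduct, Fintype.sum_sum_type, Matrix.fromBlocks]
  rw [hv]
  simp [dotProduct, Fintype.sum_sum_type, Complex.normSq_apply, Complex.mul_re,
    Complex.re_sum, Finset.sum_add_distrib, Finset.sum_sub_distrib, mul_comm,
    ← Complex.ofReal_pow, Complex.ofReal_re]
  ring

lemma UAU {N : ℕ} (lhat : Fin N → ℂ) (A : Matrix (Fin N) (Fin N) ℂ) :
    (Ul lhat)ᴴ * A * Ul lhat
      = Matrix.fromBlocks A (Matrix.replicateCol Unit (A *ᵥ lhat))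
          (Matrix.replicateRow Unit (star lhat ᵥ* A))
          (Matrix.of fun _ _ => star lhat ⬝ᵥ A *ᵥ lhat) := by
  unfold Ul
  rw [conjTranspose_fromCols_eq_fromRows_conjTranspose, conjTranspose_one,
    conjTranspose_replicateCol, Matrix.fromRows_mul, Matrix.one_mul, fromRows_mul_fromCols,
    Matrix.mul_one, Matrix.mul_one, ← replicateCol_mulVec, ← replicateRow_vecMul, replicateRow_mul_replicateCol,
    ← dotProduct_mulVec]

lemma SC11_PQ {N : ℕ} (W V : Matrix (Fin N) (Fin N) ℂ) (lhat : Fin N → ℂ) (I ω υ : ℝ) :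
    SC11 W V lhat I ω υ
      = -(((Ul lhat)ᴴ * (W + V) * Ul lhat - EI I) + (ω : ℂ) • QQ υ) := by
  unfold SC11 EI QQ
  rw [Matrix.mul_add, Matrix.add_mul, UAU lhat V]
  ext (i | i) (j | j) <;>
    simp [Matrix.fromBlocks, Matrix.sub_apply, Matrix.add_apply, Matrix.one_apply] <;>
    ring

lemma UAU_herm {N : ℕ} (lhat : Fin N → ℂ) (A : Matrix (Fin N) (Fin N) ℂ) (hA : Aᴴ = A) :
    ((Ul lhat)ᴴ * A * Ul lhat)ᴴ = (Ul lhat)ᴴ * A * Ul lhat := by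
  rw [conjTranspose_mul, conjTranspose_mul, conjTranspose_conjTranspose, hA, Matrix.mul_assoc]

lemma EI_herm {N : ℕ} (I : ℝ) : (EI (N := N) I)ᴴ = EI I := by
  unfold EI
  rw [Matrix.fromBlocks_conjTranspose]
  congr 1 <;> try simp
  ext i j
  simp [Matrix.conjTranspose_apply, Complex.star_def, Complex.conj_ofReal]

lemma QQ_herm {N : ℕ} (υ : ℝ) : (QQ (N := N) υ)ᴴ = QQ υ := by
  unfold QQ
  have h2 : (Matrix.of fun _ _ => ((υ:ℂ)^2) : Matrix Unit Unit ℂ)ᴴ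
      = Matrix.of fun _ _ => ((υ:ℂ)^2) := by
    ext i j
    simp [Matrix.conjTranspose_apply, Complex.star_def, ← Complex.ofReal_pow,
      Complex.conj_ofReal]
  rw [Matrix.fromBlocks_conjTranspose, conjTranspose_neg, conjTranspose_one,
    conjTranspose_zero, conjTranspose_zero, h2]

lemma qf_UAU {N : ℕ} (lhat : Fin N → ℂ) (A : Matrix (Fin N) (Fin N) ℂ)
    (x : Fin N ⊕ Unit → ℂ) :
    RIqf ((Ul lhat)ᴴ * A * Ul lhat) x = RIqf A (Ul lhat *ᵥ x) := by
  unfold RIqf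
  rw [← Matrix.mulVec_mulVec, ← Matrix.mulVec_mulVec, dotProduct_mulVec (star x),
    ← star_mulVec]

end RobustInterference

open RobustInterference in
/-- S-procedure form of the robust interference constraint: the robust constraint
`lᴴ (W̄ + V̄) l ≤ I` for all `l = l̂ + Δl` with `‖Δl‖² ≤ υ²` holds iff there exists
`ω ≥ 0` making the associated LMI matrix positive semidefinite. -/
theorem robust_interference_lmi {N : ℕ} (hN : 1 ≤ N)
    (W V : Matrix (Fin N) (Fin N) ℂ) (hW : W.IsHermitian) (hV : V.IsHermitian)
    (lhat : Fin N → ℂ) (I : ℝ) (υ : ℝ) (hυ : 0 < υ) :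
    (∀ Δl : Fin N → ℂ, (star Δl ⬝ᵥ Δl).re ≤ υ ^ 2 →
        (star (lhat + Δl) ⬝ᵥ (W + V) *ᵥ (lhat + Δl)).re ≤ I) ↔
      ∃ ω : ℝ, 0 ≤ ω ∧ (SC11 W V lhat I ω υ).PosSemidef := by
  have hA : (W + V)ᴴ = W + V := by
    rw [conjTranspose_add, hW.eq, hV.eq]
  -- the P and Q of the S-procedure
  set P : Matrix (Fin N ⊕ Unit) (Fin N ⊕ Unit) ℂ :=
    (Ul lhat)ᴴ * (W + V) * Ul lhat - EI I with hPdef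
  set Q : Matrix (Fin N ⊕ Unit) (Fin N ⊕ Unit) ℂ := QQ υ with hQdef
  have hPherm : Pᴴ = P := by
    rw [hPdef, conjTranspose_sub, UAU_herm lhat _ hA, EI_herm]
  have hQherm : Qᴴ = Q := QQ_herm υ
  have hSCherm : ∀ ω : ℝ, (SC11 W V lhat I ω υ)ᴴ = SC11 W V lhat I ω υ := by
    intro ω
    rw [SC11_PQ, conjTranspose_neg, conjTranspose_add, hPherm, conjTranspose_smul,
      Complex.star_def, Complex.conj_ofReal, hQherm]
  -- quadratic form decomposition
  have hqfP : ∀ x : Fin N ⊕ Unit → ℂ,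
      RIqf P x = RIqf (W + V) ((fun i => x (Sum.inl i)) + x (Sum.inr ()) • lhat)
        - I * Complex.normSq (x (Sum.inr ())) := by
    intro x
    rw [hPdef, qf_sub, qf_UAU, qf_EI, Ul_mulVec]
  have hqfSC : ∀ (ω : ℝ) (x : Fin N ⊕ Unit → ℂ),
      RIqf (SC11 W V lhat I ω υ) x = -(RIqf P x + ω * RIqf Q x) := by
    intro ω x
    rw [SC11_PQ, ← hPdef, ← hQdef, qf_neg, qf_add, qf_real_smul]
  constructor
  · -- forward direction: the S-lemma
    intro hyp
    have h : ∀ x : Fin N ⊕ Unit → ℂ, 0 ≤ RIqf Q x → RIqf P x ≤ 0 := by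
      intro x hQx
      rw [hQdef, qf_QQ] at hQx
      set u : Fin N → ℂ := fun i => x (Sum.inl i) with hudef
      set t : ℂ := x (Sum.inr ()) with htdef
      rw [hqfP x, ← hudef, ← htdef]
      rcases eq_or_ne t 0 with ht | ht
      · have hu0 : (star u ⬝ᵥ u).re ≤ 0 := by
          rw [ht] at hQx
          simpa using hQx
        have hu : u = 0 := by
          have h1 := dot_self_re u
          have h2 : ∀ i, Complex.normSq (u i) = 0 := by
            intro i
            have hnn : ∀ j ∈ Finset.univ, (0:ℝ) ≤ Complex.normSq (u j) :=
              fun j _ => Complex.normSq_nonneg _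
            have hsum : ∑ j, Complex.normSq (u j) ≤ 0 := by rw [← h1]; exact hu0
            have := (Finset.sum_eq_zero_iff_of_nonneg hnn).mp
              (le_antisymm hsum (Finset.sum_nonneg hnn))
            exact this i (Finset.mem_univ i)
          funext i
          exact Complex.normSq_eq_zero.mp (h2 i)
        rw [hu, ht]
        simp [qf_zero]
      · -- rescale to a point in the ball
        set Δl : Fin N → ℂ := t⁻¹ • u with hΔdef
        have htn : 0 < Complex.normSq t := Complex.normSq_pos.mpr ht
        have hball : (star Δl ⬝ᵥ Δl).re ≤ υ ^ 2 := by
          rw [hΔdef]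
          have : (star (t⁻¹ • u) ⬝ᵥ (t⁻¹ • u)).re = Complex.normSq t⁻¹ * (star u ⬝ᵥ u).re := by
            rw [dot_self_re, dot_self_re, Finset.mul_sum]
            refine Finset.sum_congr rfl fun i _ => ?_
            rw [Pi.smul_apply, smul_eq_mul, Complex.normSq_mul]
          rw [this, map_inv₀, inv_mul_le_iff₀ htn, mul_comm]
          linarith [hQx]
        have hz : u + t • lhat = t • (lhat + Δl) := by
          rw [hΔdef, smul_add, smul_smul, mul_inv_cancel₀ ht, one_smul]
          exact (add_comm _ _)
        rw [hz, qf_smul]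
        have := hyp Δl hball
        have hval : RIqf (W + V) (lhat + Δl) ≤ I := this
        nlinarith [Complex.normSq_nonneg t, htn]
    have hx₀ : 0 < RIqf Q (Sum.elim (0 : Fin N → ℂ) (fun _ => 1)) := by
      rw [hQdef, qf_QQ]
      simp
      positivity
    obtain ⟨ω, hω, hineq⟩ := s_lemma P Q hPherm hQherm h _ hx₀
    refine ⟨ω, hω, Matrix.posSemidef_iff_dotProduct_mulVec.mpr ⟨?_, ?_⟩⟩
    · exact hSCherm ω
    · intro x
      have h1 := hineq x
      have h2 := hqfSC ω x
      have him : (star x ⬝ᵥ SC11 W V lhat I ω υ *ᵥ x).im = 0 :=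
        qf_real _ (hSCherm ω) x
      rw [Complex.le_def]
      refine ⟨?_, by simp [him]⟩
      simp only [Complex.zero_re]
      rw [show (star x ⬝ᵥ SC11 W V lhat I ω υ *ᵥ x).re = RIqf (SC11 W V lhat I ω υ) x from rfl]
      rw [h2]
      linarith
  · -- backward direction
    rintro ⟨ω, hω, hpsd⟩
    intro Δl hball
    set x : Fin N ⊕ Unit → ℂ := Sum.elim Δl (fun _ => 1) with hxdef
    have h0 := hpsd.dotProduct_mulVec_nonneg x
    have hre : 0 ≤ RIqf (SC11 W V lhat I ω υ) x := by
      rw [Complex.le_def] at h0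
      exact h0.1
    rw [hqfSC ω x] at hre
    have hPx : RIqf P x = RIqf (W + V) (lhat + Δl) - I := by
      rw [hqfP x]
      have h1 : (fun i => x (Sum.inl i)) = Δl := rfl
      have h2 : x (Sum.inr ()) = 1 := rfl
      rw [h1, h2, one_smul]
      rw [show Δl + lhat = lhat + Δl from add_comm _ _]
      simp
    have hQx : RIqf Q x = υ ^ 2 - (star Δl ⬝ᵥ Δl).re := by
      rw [hQdef, qf_QQ]
      have h1 : (fun i => x (Sum.inl i)) = Δl := rfl
      have h2 : x (Sum.inr ()) = 1 := rfl
      rw [h1, h2]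
      simp
    rw [hPx, hQx] at hre
    have : 0 ≤ ω * (υ ^ 2 - (star Δl ⬝ᵥ Δl).re) := mul_nonneg hω (by linarith)
    have goal : RIqf (W + V) (lhat + Δl) ≤ I := by nlinarith
    exact goal
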